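/- Let m₁,…,m₆ be the six lines of PG(5,3) represented respectively by the 2×6 matrices [[1,0,1,2,2,0],[0,1,1,0,2,2]], [[1,0,1,2,1,1],[0,1,1,0,2,0]], [[1,0,0,2,0,1],[0,1,1,1,2,1]], [[1,0,0,2,2,0],[0,1,1,1,2,2]], [[1,0,2,2,1,1],[0,1,0,2,2,0]], [[1,0,2,2,0,1],[0,1,0,2,2,1]] over GF(3). Then with respect to the Gram matrix M₆, every two not necessarily distinct of these six lines are opposite: mᵢ ∩ mⱼ^⊥ = 0 for all 1 ≤ i, j ≤ 6 (in particular each mᵢ is non-degenerate); i.e., {m₁,…,m₆} is a partial perp-system of W(M₆). -/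

import Mathlib

open Matrix

abbrev F3 := ZMod 3
abbrev V6 := Fin 6 → F3

/-- The line (2-dim subspace) represented by a 2×6 matrix: the span of its rows. -/
def lineOf (A : Matrix (Fin 2) (Fin 6) F3) : Submodule F3 V6 :=
  Submodule.span F3 (Set.range A)

/-- The perp of a subspace `W` with respect to a 6×6 Gram matrix `M`:
`{x | xᵀ M w = 0 for all w ∈ W}`. -/
def perp (M : Matrix (Fin 6) (Fin 6) F3) (W : Submodule F3 V6) : Submodule F3 V6 where
  carrier := {x | ∀ w ∈ W, x ⬝ᵥ M.mulVec w = 0}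
  add_mem' := by
    intro a b ha hb w hw
    simp only [Set.mem_setOf_eq] at *
    rw [add_dotProduct, ha w hw, hb w hw, add_zero]
  zero_mem' := by
    intro w hw
    exact zero_dotProduct _
  smul_mem' := by
    intro c x hx w hw
    simp only [Set.mem_setOf_eq] at *
    rw [smul_dotProduct, hx w hw, smul_zero]

/-- A 2×6 matrix built from three 2×2 blocks. -/
def blk3 (A B C : Matrix (Fin 2) (Fin 2) F3) : Matrix (Fin 2) (Fin 6) F3 :=
  Matrix.of fun i j => ![A, B, C] ⟨(j : ℕ) / 2, by omega⟩ i ⟨(j : ℕ) % 2, by omega⟩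

/-- A 6×6 matrix built from nine 2×2 blocks. -/
def blk33 (M : Matrix (Fin 3) (Fin 3) (Matrix (Fin 2) (Fin 2) F3)) :
    Matrix (Fin 6) (Fin 6) F3 :=
  Matrix.of fun i j =>
    M ⟨(i : ℕ) / 2, by omega⟩ ⟨(j : ℕ) / 2, by omega⟩ ⟨(i : ℕ) % 2, by omega⟩ ⟨(j : ℕ) % 2, by omega⟩

/-- The 2×2 block of a 6×6 matrix in block-position `(i, j)`. -/
def blkAt (M : Matrix (Fin 6) (Fin 6) F3) (i j : Fin 3) : Matrix (Fin 2) (Fin 2) F3 :=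
  Matrix.of fun a b => M ⟨2 * (i : ℕ) + (a : ℕ), by omega⟩ ⟨2 * (j : ℕ) + (b : ℕ), by omega⟩

/-- Two (not necessarily distinct) lines are opposite w.r.t. `M` if `ℓ ∩ m^⊥ = 0`. -/
def Opp (M : Matrix (Fin 6) (Fin 6) F3) (ℓ m : Submodule F3 V6) : Prop :=
  ℓ ⊓ perp M m = ⊥

/-- The six lines `m₁, …, m₆`. -/
def mline : Fin 6 → Submodule F3 V6 :=
  ![lineOf !![1, 0, 1, 2, 2, 0; 0, 1, 1, 0, 2, 2],
    lineOf !![1, 0, 1, 2, 1, 1; 0, 1, 1, 0, 2, 0],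
    lineOf !![1, 0, 0, 2, 0, 1; 0, 1, 1, 1, 2, 1],
    lineOf !![1, 0, 0, 2, 2, 0; 0, 1, 1, 1, 2, 2],
    lineOf !![1, 0, 2, 2, 1, 1; 0, 1, 0, 2, 2, 0],
    lineOf !![1, 0, 2, 2, 0, 1; 0, 1, 0, 2, 2, 1]]

/-- The Gram matrix `M₆`. -/
def M6 : Matrix (Fin 6) (Fin 6) F3 :=
  !![0, 0, 2, 2, 0, 0;
     0, 0, 0, 0, 1, 1;
     1, 0, 0, 0, 0, 0;
     1, 0, 0, 0, 1, 0;
     0, 2, 0, 2, 0, 0;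
     0, 2, 0, 0, 0, 0]

lemma key (A B : Matrix (Fin 2) (Fin 6) F3) (M : Matrix (Fin 6) (Fin 6) F3)
    (h : (A * M * Bᵀ).det ≠ 0) : lineOf A ⊓ perp M (lineOf B) = ⊥ := by
  rw [eq_bot_iff]
  rintro x ⟨hx1, hx2⟩
  rw [SetLike.mem_coe] at hx1 hx2
  erw [lineOf, Submodule.mem_span_range_iff_exists_fun] at hx1
  obtain ⟨c, hc⟩ := hx1
  have hG : c ᵥ* (A * M * Bᵀ) = 0 := by
    funext j
    have hBj : (B j : V6) ∈ lineOf B := Submodule.subset_span ⟨j, rfl⟩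
    have h0 := hx2 (B j) hBj
    have hx : c ᵥ* A = x := by 
      funext k
      rw [← hc]
      simp [Matrix.vecMul, dotProduct, Finset.sum_apply]
    rw [← Matrix.vecMul_vecMul, ← Matrix.vecMul_vecMul, hx, Matrix.vecMul_transpose]
    have hrw : (B *ᵥ (x ᵥ* M)) j = (x ᵥ* M) ⬝ᵥ B j := dotProduct_comm _ _
    rw [hrw, ← Matrix.dotProduct_mulVec]
    exact h0
  have hcz : c = 0 := by
    have hunit : IsUnit (A * M * Bᵀ) := (Matrix.isUnit_iff_isUnit_det _).2 (Ne.isUnit h)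
    have := congrArg (fun v => v ᵥ* (A * M * Bᵀ)⁻¹) hG
    simpa [Matrix.vecMul_vecMul, Matrix.mul_nonsing_inv _ ((Matrix.isUnit_iff_isUnit_det _).1 hunit)] using this
  rw [← hc, hcz]
  simp

/-- The six lines `m₁, …, m₆` form a partial perp-system of `W(M₆)`:
every two not necessarily distinct of them are opposite with respect to `M₆`. -/
theorem stmt13 : ∀ i j : Fin 6, mline i ⊓ perp M6 (mline j) = ⊥ := by
  intro i j
  fin_cases i <;> fin_cases j <;>
    exact key _ _ _ (by decide)
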